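/- Let L be the Laplacian of a connected undirected graph on N vertices and c ∈ R^N with L c ≠ 0. Then ‖L sign(L c)‖_∞ ≥ 1, where sign is applied componentwise. -/

import Mathlib

open Matrix

/-- If `L` is the Laplacian of a connected graph and `L c ≠ 0`, then
`‖L sign(L c)‖_∞ ≥ 1`. -/
theorem laplacian_sign_lower_bound (N : ℕ) (G : SimpleGraph (Fin N))
    [DecidableRel G.Adj] (hG : G.Connected) (c : Fin N → ℝ)
    (hc : (G.lapMatrix ℝ) *ᵥ c ≠ 0) :
    ∃ i, 1 ≤ |((G.lapMatrix ℝ) *ᵥ (fun j => Real.sign (((G.lapMatrix ℝ) *ᵥ c) j))) i| := by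
  set y := (G.lapMatrix ℝ) *ᵥ c with hy
  set s : Fin N → ℝ := fun j => Real.sign (y j) with hs
  set t : Fin N → ℤ := fun j => if y j < 0 then -1 else if 0 < y j then 1 else 0 with ht
  have hst : ∀ j, s j = (t j : ℝ) := by
    intro j
    simp only [hs, ht]
    rcases lt_trichotomy (y j) 0 with h | h | h
    · rw [Real.sign_of_neg h, if_pos h]; norm_num
    · rw [h, Real.sign_zero, if_neg (lt_irrefl 0), if_neg (lt_irrefl 0)]; norm_num
    · rw [Real.sign_of_pos h, if_neg (not_lt.mpr h.le), if_pos h]; norm_num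
  -- entries of L s are integers
  have hint : ∀ i, ((G.lapMatrix ℝ) *ᵥ s) i = (((G.lapMatrix ℤ) *ᵥ t) i : ℝ) := by
    intro i
    rw [SimpleGraph.lapMatrix_mulVec_apply, SimpleGraph.lapMatrix_mulVec_apply]
    push_cast
    simp only [hst]
  -- L s ≠ 0
  have hLs : (G.lapMatrix ℝ) *ᵥ s ≠ 0 := by
    intro h0
    have hconst : ∀ i j : Fin N, s i = s j := by
      intro i j
      have := (G.lapMatrix_mulVec_eq_zero_iff_forall_reachable (x := s)).mp
        h0
      exact this i j (hG.preconnected i j)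
    -- s is constant with value a := s i₀
    obtain ⟨k, hk⟩ : ∃ k, y k ≠ 0 := by
      by_contra h
      push_neg at h
      exact hc (funext h)
    -- sum of y is zero
    have hsum : ∑ i, y i = 0 := by
      have h1 : ∀ j, ∑ i, G.lapMatrix ℝ i j = 0 := by
        intro j
        have := congrFun (G.lapMatrix_mulVec_const_eq_zero (R := ℝ)) j
        simp only [Matrix.mulVec, dotProduct, mul_one, Pi.zero_apply] at this
        calc ∑ i, G.lapMatrix ℝ i j = ∑ i, G.lapMatrix ℝ j i := by
              refine Finset.sum_congr rfl fun i _ => ?_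
              exact (G.isSymm_lapMatrix (R := ℝ)).apply j i
          _ = 0 := this
      rw [hy]
      simp only [Matrix.mulVec, dotProduct]
      rw [Finset.sum_comm]
      simp_rw [← Finset.sum_mul, h1, zero_mul, Finset.sum_const_zero]
    rcases lt_trichotomy (y k) 0 with h | h | h
    · -- s k = -1, so all s = -1, all y < 0, sum < 0
      have hall : ∀ i, y i < 0 := by
        intro i
        have hsi : Real.sign (y i) = -1 := by
          have h2 := hconst i k
          simp only [hs] at h2
          rw [h2]; exact Real.sign_of_neg h
        rcases lt_trichotomy (y i) 0 with h' | h' | h'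
        · exact h'
        · exfalso; simp [h'] at hsi
        · exfalso; rw [Real.sign_of_pos h'] at hsi; norm_num at hsi
      have : ∑ i, y i < 0 := Finset.sum_neg (fun i _ => hall i) ⟨k, Finset.mem_univ k⟩
      linarith
    · exact hk h
    · have hall : ∀ i, 0 < y i := by
        intro i
        have hsi : Real.sign (y i) = 1 := by
          have h2 := hconst i k
          simp only [hs] at h2
          rw [h2]; exact Real.sign_of_pos h
        rcases lt_trichotomy (y i) 0 with h' | h' | h'
        · exfalso; rw [Real.sign_of_neg h'] at hsi; norm_num at hsi
        · exfalso; simp [h'] at hsi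
        · exact h'
      have : 0 < ∑ i, y i := Finset.sum_pos (fun i _ => hall i) ⟨k, Finset.mem_univ k⟩
      linarith
  obtain ⟨i, hi⟩ := Function.ne_iff.mp hLs
  refine ⟨i, ?_⟩
  rw [hint i]
  rw [hint i] at hi
  have : ((G.lapMatrix ℤ) *ᵥ t) i ≠ 0 := by
    intro h0; apply hi; rw [h0]; norm_num
  rw [← Int.cast_abs]
  exact_mod_cast Int.one_le_abs this
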